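/- Let z_1, …, z_N be pairwise distinct complex numbers and let μ : 𝔤 → ℂ be a linear functional. If x ∈ 𝔤 satisfies μ([x, y]) = 0 for all y ∈ 𝔤 (i.e. x lies in the centralizer of μ under the coadjoint action), then each inhomogeneous quadratic Gaudin Hamiltonian commutes with the diagonal action of x: Δ(x) ∘ H_i^μ = H_i^μ ∘ Δ(x) for all 1 ≤ i ≤ N, where Δ(x) = Σ_{j=1}^{N} x^{(j)}. -/

import Mathlib

open scoped TensorProduct

noncomputable section

variable {𝔤 : Type*} [LieRing 𝔤] [LieAlgebra ℂ 𝔤]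
variable {N : ℕ} (V : Fin N → Type*) [∀ i, AddCommGroup (V i)] [∀ i, Module ℂ (V i)]
  [∀ i, LieRingModule 𝔤 (V i)] [∀ i, LieModule ℂ 𝔤 (V i)]

/-- The endomorphism `x^{(i)}` of `V 1 ⊗ ⋯ ⊗ V N` acting as `x` in the `i`-th tensor
factor and as the identity in the other factors. -/
def opAt (i : Fin N) (x : 𝔤) : Module.End ℂ (⨂[ℂ] j, V j) :=
  PiTensorProduct.map
    (Function.update (fun j => (LinearMap.id : V j →ₗ[ℂ] V j)) i
      (LieModule.toEnd ℂ 𝔤 (V i) x))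

/-- The diagonal action `Δ(x) = ∑_j x^{(j)}`. -/
def diagAct (x : 𝔤) : Module.End ℂ (⨂[ℂ] j, V j) :=
  ∑ j, opAt V j x

/-- The inhomogeneous quadratic Gaudin Hamiltonian
`H_i^μ = ∑_{k ≠ i} (z i - z k)⁻¹ ∑_a x_a^{(i)} ∘ x_a^{(k)} + ∑_a μ(x_a) x_a^{(i)}`. -/
def gaudinHmu {d : ℕ} (b : Fin d → 𝔤) (μ : Module.Dual ℂ 𝔤) (z : Fin N → ℂ) (i : Fin N) :
    Module.End ℂ (⨂[ℂ] j, V j) :=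
  (∑ k ∈ Finset.univ.erase i, (z i - z k)⁻¹ •
    ∑ a, opAt V i (b a) * opAt V k (b a)) +
  ∑ a, μ (b a) • opAt V i (b a)

/- ### Auxiliary lemmas -/

lemma opAt_add (i : Fin N) (x y : 𝔤) : opAt V i (x + y) = opAt V i x + opAt V i y := by
  unfold opAt
  rw [map_add, PiTensorProduct.map_update_add]

lemma opAt_smul (i : Fin N) (c : ℂ) (x : 𝔤) : opAt V i (c • x) = c • opAt V i x := by
  unfold opAt
  rw [map_smul, PiTensorProduct.map_update_smul]

/-- `opAt` as a linear map in the Lie algebra element. -/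
def opAtL (i : Fin N) : 𝔤 →ₗ[ℂ] Module.End ℂ (⨂[ℂ] j, V j) where
  toFun := opAt V i
  map_add' := opAt_add V i
  map_smul' := opAt_smul V i

lemma opAt_mul_same (i : Fin N) (x y : 𝔤) :
    opAt V i x * opAt V i y =
      PiTensorProduct.map (Function.update (fun j => (LinearMap.id : V j →ₗ[ℂ] V j)) i
        (LieModule.toEnd ℂ 𝔤 (V i) x * LieModule.toEnd ℂ 𝔤 (V i) y)) := by
  unfold opAt
  rw [← PiTensorProduct.map_mul]
  congr 1
  funext j
  rcases eq_or_ne j i with rfl | h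
  · simp
  · simp [Function.update_of_ne h, Module.End.mul_eq_comp]

lemma opAt_mul_of_ne {i k : Fin N} (h : i ≠ k) (x y : 𝔤) :
    opAt V i x * opAt V k y =
      PiTensorProduct.map (Function.update
        (Function.update (fun j => (LinearMap.id : V j →ₗ[ℂ] V j)) k
          (LieModule.toEnd ℂ 𝔤 (V k) y)) i (LieModule.toEnd ℂ 𝔤 (V i) x)) := by
  unfold opAt
  rw [← PiTensorProduct.map_mul]
  congr 1
  funext j
  rcases eq_or_ne j i with rfl | hji
  · simp [Function.update_of_ne h, Module.End.mul_eq_comp]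
  · rcases eq_or_ne j k with rfl | hjk
    · simp [Function.update_of_ne hji, Module.End.mul_eq_comp]
    · simp [Function.update_of_ne hji, Function.update_of_ne hjk, Module.End.mul_eq_comp]

lemma opAt_comm {i k : Fin N} (h : i ≠ k) (x y : 𝔤) :
    opAt V i x * opAt V k y = opAt V k y * opAt V i x := by
  rw [opAt_mul_of_ne V h, opAt_mul_of_ne V h.symm, Function.update_comm h]

lemma map_update_sub (i : Fin N) (u v : V i →ₗ[ℂ] V i) :
    PiTensorProduct.map (Function.update (fun j => (LinearMap.id : V j →ₗ[ℂ] V j)) i (u - v)) =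
      PiTensorProduct.map (Function.update (fun j => (LinearMap.id : V j →ₗ[ℂ] V j)) i u) -
      PiTensorProduct.map (Function.update (fun j => (LinearMap.id : V j →ₗ[ℂ] V j)) i v) := by
  rw [sub_eq_add_neg u v, ← neg_one_smul ℂ v, PiTensorProduct.map_update_add,
    PiTensorProduct.map_update_smul]
  module

lemma opAt_lie (i : Fin N) (x y : 𝔤) :
    opAt V i x * opAt V i y - opAt V i y * opAt V i x = opAt V i ⁅x, y⁆ := by
  rw [opAt_mul_same, opAt_mul_same]
  unfold opAt
  letI : LieRing (Module.End ℂ (V i)) := LieRing.ofAssociativeRing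
  rw [LieHom.map_lie, Ring.lie_def, map_update_sub]

lemma diag_comm (x y : 𝔤) (i : Fin N) :
    diagAct V x * opAt V i y - opAt V i y * diagAct V x = opAt V i ⁅x, y⁆ := by
  unfold diagAct
  rw [Finset.sum_mul, Finset.mul_sum, ← Finset.sum_sub_distrib,
    Finset.sum_eq_single i (fun j _ hji => by rw [opAt_comm V hji, sub_self])
      (fun hi => absurd (Finset.mem_univ i) hi)]
  exact opAt_lie V i x y

/-- if `x` lies in the centralizer of `μ` under the coadjoint action
(`μ [x, y] = 0` for all `y`), then each inhomogeneous quadratic Gaudin Hamiltonian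
commutes with the diagonal action of `x`. -/
theorem inhomogeneous_gaudin_commutes_with_centralizer
    [LieAlgebra.IsSemisimple ℂ 𝔤] [FiniteDimensional ℂ 𝔤]
    [∀ i, FiniteDimensional ℂ (V i)]
    (hN : 0 < N) {d : ℕ} (b : Module.Basis (Fin d) ℂ 𝔤)
    (horth : ∀ a a' : Fin d, killingForm ℂ 𝔤 (b a) (b a') = if a = a' then 1 else 0)
    (z : Fin N → ℂ) (hz : Function.Injective z) (μ : Module.Dual ℂ 𝔤)
    (x : 𝔤) (hx : ∀ y : 𝔤, μ ⁅x, y⁆ = 0) (i : Fin N) :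
    diagAct V x * gaudinHmu V (⇑b) μ z i = gaudinHmu V (⇑b) μ z i * diagAct V x := by
  -- coordinates with respect to the orthonormal basis
  have coord : ∀ (y : 𝔤) (a : Fin d), killingForm ℂ 𝔤 (b a) y = b.repr y a := by
    intro y a
    conv_lhs => rw [← b.sum_repr y]
    rw [map_sum]
    simp [horth, Finset.sum_ite_eq', mul_comm]
  have expand : ∀ y : 𝔤, ∑ a, (b.repr y a) • b a = y := fun y => b.sum_repr y
  have mu_repr : ∀ y : 𝔤, ∑ a, b.repr y a * μ (b a) = μ y := by
    intro y
    conv_rhs => rw [← b.sum_repr y]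
    rw [map_sum]
    simp [smul_eq_mul]
  -- structure coefficients and their antisymmetry
  set C : Fin d → Fin d → ℂ := fun a c => b.repr ⁅x, b a⁆ c with hCdef
  have hC : ∀ a c, C a c = - C c a := by
    intro a c
    have h1 : C a c = killingForm ℂ 𝔤 (b c) ⁅x, b a⁆ := (coord _ _).symm
    have h2 : C c a = killingForm ℂ 𝔤 (b a) ⁅x, b c⁆ := (coord _ _).symm
    rw [h1, h2, LieModule.traceForm_comm ℂ 𝔤 𝔤 (b c) ⁅x, b a⁆,
      LieModule.traceForm_apply_lie_apply' ℂ 𝔤 𝔤]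
  have hbracket : ∀ a : Fin d, ⁅x, b a⁆ = ∑ c, C a c • b c := fun a => (expand _).symm
  -- the two pieces of the Hamiltonian
  rw [← sub_eq_zero, gaudinHmu, mul_add, add_mul]
  have hsplit : ∀ A B S T : Module.End ℂ (⨂[ℂ] j, V j),
      A + B - (S + T) = (A - S) + (B - T) := fun A B S T => by abel
  rw [hsplit]
  -- linear part vanishes
  have hlin : diagAct V x * (∑ a, μ (b a) • opAt V i (b a)) -
      (∑ a, μ (b a) • opAt V i (b a)) * diagAct V x = 0 := by
    rw [Finset.mul_sum, Finset.sum_mul, ← Finset.sum_sub_distrib]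
    have : ∀ a : Fin d, diagAct V x * (μ (b a) • opAt V i (b a)) -
        (μ (b a) • opAt V i (b a)) * diagAct V x = μ (b a) • opAt V i ⁅x, b a⁆ := by
      intro a
      rw [mul_smul_comm, smul_mul_assoc, ← diag_comm V x (b a) i, smul_sub]
    rw [Finset.sum_congr rfl fun a _ => this a]
    have : ∑ a, μ (b a) • opAt V i ⁅x, b a⁆ = opAtL V i (∑ a, μ (b a) • ⁅x, b a⁆) := by
      rw [map_sum]
      exact Finset.sum_congr rfl fun a _ => (opAtL V i).map_smul (μ (b a)) ⁅x, b a⁆ |>.symm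
    rw [this]
    have hvec : (∑ a, μ (b a) • ⁅x, b a⁆ : 𝔤) = 0 := by
      have : ∀ a : Fin d, μ (b a) • ⁅x, b a⁆ = ∑ c, (μ (b a) * C a c) • b c := by
        intro a
        rw [hbracket a, Finset.smul_sum]
        exact Finset.sum_congr rfl fun c _ => by rw [smul_smul]
      rw [Finset.sum_congr rfl fun a _ => this a, Finset.sum_comm]
      have hinner : ∀ c : Fin d, ∑ a, (μ (b a) * C a c) • b c = 0 := by
        intro c
        rw [← Finset.sum_smul]
        have : ∑ a, μ (b a) * C a c = 0 := by
          have hCac : ∀ a, C a c = b.repr ⁅b c, x⁆ a := by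
            intro a
            have h1 : C a c = killingForm ℂ 𝔤 (b c) ⁅x, b a⁆ := (coord _ _).symm
            rw [h1, ← LieModule.traceForm_apply_lie_apply ℂ 𝔤 𝔤 (b c) x (b a),
              LieModule.traceForm_comm ℂ 𝔤 𝔤, coord]
          calc ∑ a, μ (b a) * C a c = ∑ a, b.repr ⁅b c, x⁆ a * μ (b a) :=
                Finset.sum_congr rfl fun a _ => by rw [hCac a, mul_comm]
            _ = μ ⁅b c, x⁆ := mu_repr _
            _ = 0 := by rw [← lie_skew, map_neg, hx, neg_zero]
        rw [this, zero_smul]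
      rw [Finset.sum_congr rfl fun c _ => hinner c, Finset.sum_const_zero]
    rw [hvec, map_zero]
  -- quadratic part vanishes
  have hquad : diagAct V x * (∑ k ∈ Finset.univ.erase i, (z i - z k)⁻¹ •
        ∑ a, opAt V i (b a) * opAt V k (b a)) -
      (∑ k ∈ Finset.univ.erase i, (z i - z k)⁻¹ •
        ∑ a, opAt V i (b a) * opAt V k (b a)) * diagAct V x = 0 := by
    rw [Finset.mul_sum, Finset.sum_mul, ← Finset.sum_sub_distrib]
    apply Finset.sum_eq_zero
    intro k hk
    have hki : k ≠ i := Finset.ne_of_mem_erase hk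
    set Q : Module.End ℂ (⨂[ℂ] j, V j) := ∑ a, opAt V i (b a) * opAt V k (b a) with hQ
    have hstep : diagAct V x * ((z i - z k)⁻¹ • Q) - (z i - z k)⁻¹ • Q * diagAct V x =
        (z i - z k)⁻¹ • (diagAct V x * Q - Q * diagAct V x) := by
      rw [mul_smul_comm, smul_mul_assoc, smul_sub]
    rw [hstep]
    have hzero : diagAct V x * Q - Q * diagAct V x = 0 := by
      rw [hQ]
      rw [Finset.mul_sum, Finset.sum_mul, ← Finset.sum_sub_distrib]
      have hterm : ∀ a : Fin d,
          diagAct V x * (opAt V i (b a) * opAt V k (b a)) -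
            opAt V i (b a) * opAt V k (b a) * diagAct V x =
          opAt V i ⁅x, b a⁆ * opAt V k (b a) + opAt V i (b a) * opAt V k ⁅x, b a⁆ := by
        intro a
        have key : ∀ D A B : Module.End ℂ (⨂[ℂ] j, V j),
            D * (A * B) - A * B * D = (D * A - A * D) * B + A * (D * B - B * D) := by
          intro D A B
          simp only [sub_mul, mul_sub, mul_assoc]
          abel
        rw [key, diag_comm, diag_comm]
      rw [Finset.sum_congr rfl fun a _ => hterm a]
      have hexp : ∀ a : Fin d,
          opAt V i ⁅x, b a⁆ * opAt V k (b a) + opAt V i (b a) * opAt V k ⁅x, b a⁆ =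
          (∑ c, C a c • (opAt V i (b c) * opAt V k (b a))) +
          ∑ c, C a c • (opAt V i (b a) * opAt V k (b c)) := by
        intro a
        congr 1
        · rw [hbracket a, show opAt V i (∑ c, C a c • b c) = ∑ c, C a c • opAt V i (b c) by
            rw [show opAt V i (∑ c, C a c • b c) = opAtL V i (∑ c, C a c • b c) from rfl,
              map_sum]
            exact Finset.sum_congr rfl fun c _ => (opAtL V i).map_smul _ _]
          rw [Finset.sum_mul]
          exact Finset.sum_congr rfl fun c _ => smul_mul_assoc _ _ _
        · rw [hbracket a, show opAt V k (∑ c, C a c • b c) = ∑ c, C a c • opAt V k (b c) by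
            rw [show opAt V k (∑ c, C a c • b c) = opAtL V k (∑ c, C a c • b c) from rfl,
              map_sum]
            exact Finset.sum_congr rfl fun c _ => (opAtL V k).map_smul _ _]
          rw [Finset.mul_sum]
          exact Finset.sum_congr rfl fun c _ => mul_smul_comm _ _ _
      rw [Finset.sum_congr rfl fun a _ => hexp a, Finset.sum_add_distrib]
      have hswap : ∑ a, ∑ c, C a c • (opAt V i (b a) * opAt V k (b c)) =
          - ∑ a, ∑ c, C a c • (opAt V i (b c) * opAt V k (b a)) := by
        rw [Finset.sum_comm]
        rw [← Finset.sum_neg_distrib]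
        apply Finset.sum_congr rfl
        intro c _
        rw [← Finset.sum_neg_distrib]
        apply Finset.sum_congr rfl
        intro a _
        rw [hC a c]
        module
      rw [hswap, add_neg_cancel]
    rw [hzero, smul_zero]
  rw [hlin, hquad, add_zero]

end
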